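/- arXiv:2309.08598 — 4 statements merged into one kernel-verified Lean document; each statement's English description precedes it below -/
import Mathlib

section
/- Let μ be a probability measure on ℝ^d with finite second moment, and let X₀ and X₁ be ℝ^d-valued random vectors on a common probability space, each with law μ. If for every t ∈ [0,1] the random vector (1−t)X₀ + tX₁ also has law μ, then X₀ = X₁ almost surely. -/
open MeasureTheory

noncomputable section

variable {d : ℕ}

local notation "E" => EuclideanSpace ℝ (Fin d)

/-- If `X₀` and `X₁` both have law `μ` (a probability measure on `ℝ^d` with finite
second moment), and every convex combination `(1-t)X₀ + tX₁`, `t ∈ [0,1]`, also has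
law `μ`, then `X₀ = X₁` almost surely. -/
theorem eq_of_interpolation_same_law
    (μ : Measure E) [IsProbabilityMeasure μ]
    (h2μ : Integrable (fun x => ‖x‖ ^ 2) μ)
    {Ω : Type*} [MeasurableSpace Ω] (ℙ : Measure Ω) [IsProbabilityMeasure ℙ]
    (X₀ X₁ : Ω → E) (hX₀ : Measurable X₀) (hX₁ : Measurable X₁)
    (hlaw₀ : ℙ.map X₀ = μ) (hlaw₁ : ℙ.map X₁ = μ)
    (hlaw : ∀ t ∈ Set.Icc (0 : ℝ) 1,
      ℙ.map (fun ω => (1 - t) • X₀ ω + t • X₁ ω) = μ) :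
    X₀ =ᵐ[ℙ] X₁ := by
  have key : ∀ f : Ω → E, Measurable f → ℙ.map f = μ →
      Integrable (fun ω => ‖f ω‖ ^ 2) ℙ ∧ ∫ ω, ‖f ω‖ ^ 2 ∂ℙ = ∫ x, ‖x‖ ^ 2 ∂μ := by
    intro f hf hlawf
    have hcont : Continuous (fun x : E => ‖x‖ ^ 2) := continuous_norm.pow 2
    constructor
    · have h2 : Integrable (fun x => ‖x‖ ^ 2) (ℙ.map f) := hlawf ▸ h2μ
      exact (integrable_map_measure h2.aestronglyMeasurable hf.aemeasurable).mp h2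
    · rw [← hlawf]
      exact (integral_map hf.aemeasurable hcont.aestronglyMeasurable).symm
  obtain ⟨hi0, he0⟩ := key X₀ hX₀ hlaw₀
  obtain ⟨hi1, he1⟩ := key X₁ hX₁ hlaw₁
  have hYmeas : Measurable fun ω => (1 - (1/2 : ℝ)) • X₀ ω + (1/2 : ℝ) • X₁ ω :=
    (hX₀.const_smul (1 - (1/2 : ℝ))).add (hX₁.const_smul (1/2 : ℝ))
  obtain ⟨hiY, heY⟩ := key _ hYmeas (hlaw (1/2) (by norm_num))
  have par : ∀ a b : E, ‖a - b‖ ^ 2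
      = 2 * ‖a‖ ^ 2 + 2 * ‖b‖ ^ 2 - 4 * ‖(1 - (1/2 : ℝ)) • a + (1/2 : ℝ) • b‖ ^ 2 := by
    intro a b
    have h1 : (1 - (1/2 : ℝ)) • a + (1/2 : ℝ) • b = (1/2 : ℝ) • (a + b) := by
      rw [smul_add]; norm_num
    have h2 := parallelogram_law_with_norm ℝ a b
    rw [h1, norm_smul, Real.norm_eq_abs, abs_of_pos (show (0:ℝ) < 1/2 by norm_num)]
    nlinarith [h2]
  have hfun : (fun ω => ‖X₀ ω - X₁ ω‖ ^ 2)
      = fun ω => 2 * ‖X₀ ω‖ ^ 2 + 2 * ‖X₁ ω‖ ^ 2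
        - 4 * ‖(1 - (1/2 : ℝ)) • X₀ ω + (1/2 : ℝ) • X₁ ω‖ ^ 2 :=
    funext fun ω => par _ _
  have hiD : Integrable (fun ω => ‖X₀ ω - X₁ ω‖ ^ 2) ℙ := by
    rw [hfun]
    exact ((hi0.const_mul 2).add (hi1.const_mul 2)).sub (hiY.const_mul 4)
  have hint : ∫ ω, ‖X₀ ω - X₁ ω‖ ^ 2 ∂ℙ = 0 := by
    have hadd : Integrable (fun ω => 2 * ‖X₀ ω‖ ^ 2 + 2 * ‖X₁ ω‖ ^ 2) ℙ :=
      (hi0.const_mul 2).add (hi1.const_mul 2)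
    rw [hfun, integral_sub hadd (hiY.const_mul 4),
      integral_add (hi0.const_mul 2) (hi1.const_mul 2),
      integral_const_mul, integral_const_mul, integral_const_mul, he0, he1, heY]
    ring
  have hzero := (integral_eq_zero_iff_of_nonneg (fun ω => sq_nonneg _) hiD).mp hint
  filter_upwards [hzero] with ω hω
  have : ‖X₀ ω - X₁ ω‖ ^ 2 = 0 := hω
  have h := pow_eq_zero_iff (n := 2) (by norm_num) |>.mp this
  rw [norm_eq_zero, sub_eq_zero] at h
  exact h

end
end

section
/- Let μ and ν be subgaussian probability measures on ℝ^d, i.e. there exists δ > 0 with ∫ e^{δ|x|²} μ(dx) < ∞ and ∫ e^{δ|y|²} ν(dy) < ∞, and let c : ℝ^d × ℝ^d → ℝ be twice continuously differentiable with bounded Hessian. Then there exists r > 0 such that sup over P ∈ Π(μ,ν) of ∫ e^{r|∇c(x,y)|²} P(dx,dy) is finite. -/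
open MeasureTheory

noncomputable section

variable {d : ℕ}

local notation "E" => EuclideanSpace ℝ (Fin d)

/-- `P` is a coupling of `μ` and `ν`. -/
def IsCoupling (P : Measure (E × E)) (μ ν : Measure E) : Prop :=
  IsProbabilityMeasure P ∧ P.map Prod.fst = μ ∧ P.map Prod.snd = ν

/-- If `μ` and `ν` are subgaussian probability measures on `ℝ^d` and `c` is `C²`
with bounded Hessian, then there is `r > 0` such that
`sup_{P ∈ Π(μ,ν)} ∫ e^{r |∇c|²} dP < ∞`. -/
theorem exp_grad_sq_integrable_uniformly
    (μ ν : Measure E) [IsProbabilityMeasure μ] [IsProbabilityMeasure ν]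
    (hsub : ∃ δ > (0 : ℝ), Integrable (fun x => Real.exp (δ * ‖x‖ ^ 2)) μ ∧
      Integrable (fun y => Real.exp (δ * ‖y‖ ^ 2)) ν)
    (c : E × E → ℝ) (hc : ContDiff ℝ 2 c)
    (hHess : ∃ R : ℝ, ∀ z : E × E, ‖iteratedFDeriv ℝ 2 c z‖ ≤ R) :
    ∃ r > (0 : ℝ), ∃ C : ℝ, ∀ P : Measure (E × E), IsCoupling P μ ν →
      Integrable (fun z => Real.exp (r * ‖fderiv ℝ c z‖ ^ 2)) P ∧
      ∫ z, Real.exp (r * ‖fderiv ℝ c z‖ ^ 2) ∂P ≤ C := by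
  obtain ⟨δ, hδ, hμint, hνint⟩ := hsub
  obtain ⟨R, hR⟩ := hHess
  have hR0 : 0 ≤ R := le_trans (norm_nonneg _) (hR 0)
  set A := ‖fderiv ℝ c 0‖ with hA
  have hA0 : 0 ≤ A := norm_nonneg _
  -- the gradient is `R`-Lipschitz, hence of linear growth
  have hfd : ContDiff ℝ 1 (fderiv ℝ c) := hc.fderiv_right (by norm_num)
  have hbound2 : ∀ z : E × E, ‖fderiv ℝ (fderiv ℝ c) z‖ ≤ R := by
    intro z
    rw [← norm_iteratedFDeriv_zero (𝕜 := ℝ) (f := fderiv ℝ (fderiv ℝ c)) (x := z),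
      norm_iteratedFDeriv_fderiv, norm_iteratedFDeriv_fderiv]
    exact hR z
  have hlip : ∀ z : E × E, ‖fderiv ℝ c z‖ ≤ A + R * ‖z‖ := by
    intro z
    have h := Convex.norm_image_sub_le_of_norm_fderiv_le
      (f := fderiv ℝ c) (s := Set.univ)
      (fun x _ => (hfd.differentiable one_ne_zero).differentiableAt)
      (fun x _ => hbound2 x) convex_univ (Set.mem_univ (0 : E × E)) (Set.mem_univ z)
    calc ‖fderiv ℝ c z‖ ≤ ‖fderiv ℝ c z - fderiv ℝ c 0‖ + ‖fderiv ℝ c 0‖ := by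
          conv_lhs => rw [show fderiv ℝ c z =
            (fderiv ℝ c z - fderiv ℝ c 0) + fderiv ℝ c 0 by abel]
          exact norm_add_le _ _
      _ ≤ R * ‖z - 0‖ + A := by rw [hA]; gcongr
      _ = A + R * ‖z‖ := by rw [sub_zero]; ring
  set r := δ / (4 * (R ^ 2 + 1)) with hr
  have hrpos : 0 < r := by positivity
  have hkey : ∀ z : E × E, r * ‖fderiv ℝ c z‖ ^ 2 ≤
      2 * r * A ^ 2 + (δ / 2 * ‖z.1‖ ^ 2 + δ / 2 * ‖z.2‖ ^ 2) := by
    intro z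
    have h1 : ‖fderiv ℝ c z‖ ^ 2 ≤ 2 * A ^ 2 + 2 * R ^ 2 * ‖z‖ ^ 2 := by
      have h := hlip z
      nlinarith [norm_nonneg (fderiv ℝ c z), norm_nonneg z, sq_nonneg (A - R * ‖z‖)]
    have h2 : ‖z‖ ^ 2 ≤ ‖z.1‖ ^ 2 + ‖z.2‖ ^ 2 := by
      have hz : ‖z‖ = max ‖z.1‖ ‖z.2‖ := rfl
      rcases max_cases ‖z.1‖ ‖z.2‖ with ⟨he, _⟩ | ⟨he, _⟩ <;>
        rw [hz, he] <;> nlinarith [sq_nonneg ‖z.1‖, sq_nonneg ‖z.2‖]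
    have h3 : 2 * r * R ^ 2 ≤ δ / 2 := by
      have h4 : 2 * r * R ^ 2 = δ * R ^ 2 / (2 * (R ^ 2 + 1)) := by
        rw [hr]; field_simp; ring
      rw [h4, div_le_div_iff₀ (by positivity) two_pos]
      nlinarith [sq_nonneg R]
    nlinarith [sq_nonneg ‖z.1‖, sq_nonneg ‖z.2‖,
      mul_nonneg hrpos.le (sq_nonneg ‖z‖), norm_nonneg z]
  -- pointwise domination
  set g : E × E → ℝ := fun z =>
    Real.exp (2 * r * A ^ 2) *
      ((Real.exp (δ * ‖z.1‖ ^ 2) + Real.exp (δ * ‖z.2‖ ^ 2)) / 2) with hg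
  have hpt : ∀ z : E × E, Real.exp (r * ‖fderiv ℝ c z‖ ^ 2) ≤ g z := by
    intro z
    have h1 : Real.exp (r * ‖fderiv ℝ c z‖ ^ 2) ≤
        Real.exp (2 * r * A ^ 2) *
          (Real.exp (δ / 2 * ‖z.1‖ ^ 2) * Real.exp (δ / 2 * ‖z.2‖ ^ 2)) := by
      rw [← Real.exp_add, ← Real.exp_add]
      exact Real.exp_le_exp.mpr (by linarith [hkey z])
    have h2 : Real.exp (δ / 2 * ‖z.1‖ ^ 2) * Real.exp (δ / 2 * ‖z.2‖ ^ 2) ≤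
        (Real.exp (δ * ‖z.1‖ ^ 2) + Real.exp (δ * ‖z.2‖ ^ 2)) / 2 := by
      have hu : Real.exp (δ / 2 * ‖z.1‖ ^ 2) * Real.exp (δ / 2 * ‖z.1‖ ^ 2) =
          Real.exp (δ * ‖z.1‖ ^ 2) := by rw [← Real.exp_add]; ring_nf
      have hv : Real.exp (δ / 2 * ‖z.2‖ ^ 2) * Real.exp (δ / 2 * ‖z.2‖ ^ 2) =
          Real.exp (δ * ‖z.2‖ ^ 2) := by rw [← Real.exp_add]; ring_nf
      nlinarith [sq_nonneg (Real.exp (δ / 2 * ‖z.1‖ ^ 2) - Real.exp (δ / 2 * ‖z.2‖ ^ 2))]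
    calc Real.exp (r * ‖fderiv ℝ c z‖ ^ 2)
        ≤ Real.exp (2 * r * A ^ 2) *
            (Real.exp (δ / 2 * ‖z.1‖ ^ 2) * Real.exp (δ / 2 * ‖z.2‖ ^ 2)) := h1
      _ ≤ g z := by
          rw [hg]
          exact mul_le_mul_of_nonneg_left h2 (Real.exp_pos _).le
  refine ⟨r, hrpos, Real.exp (2 * r * A ^ 2) *
    (((∫ x, Real.exp (δ * ‖x‖ ^ 2) ∂μ) + ∫ y, Real.exp (δ * ‖y‖ ^ 2) ∂ν) / 2),
    fun P hP => ?_⟩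
  obtain ⟨hPprob, hPfst, hPsnd⟩ := hP
  haveI := hPprob
  have hcontf : Continuous fun x : E => Real.exp (δ * ‖x‖ ^ 2) :=
    Real.continuous_exp.comp (continuous_const.mul ((continuous_norm).pow 2))
  have hint1 : Integrable (fun z : E × E => Real.exp (δ * ‖z.1‖ ^ 2)) P := by
    have hmf : AEMeasurable Prod.fst P := measurable_fst.aemeasurable
    have := (integrable_map_measure
      (hcontf.aestronglyMeasurable) hmf).mp (hPfst ▸ hμint)
    exact this
  have hint2 : Integrable (fun z : E × E => Real.exp (δ * ‖z.2‖ ^ 2)) P := by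
    have hmf : AEMeasurable Prod.snd P := measurable_snd.aemeasurable
    have := (integrable_map_measure
      (hcontf.aestronglyMeasurable) hmf).mp (hPsnd ▸ hνint)
    exact this
  have hintg : Integrable g P := ((hint1.add hint2).div_const 2).const_mul _
  have hmeas : AEStronglyMeasurable (fun z => Real.exp (r * ‖fderiv ℝ c z‖ ^ 2)) P :=
    (Real.continuous_exp.comp
      (continuous_const.mul ((hc.continuous_fderiv (by norm_num)).norm.pow 2))).aestronglyMeasurable
  have hintexp : Integrable (fun z => Real.exp (r * ‖fderiv ℝ c z‖ ^ 2)) P := by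
    refine hintg.mono' hmeas (ae_of_all _ fun z => ?_)
    rw [Real.norm_eq_abs, abs_of_nonneg (Real.exp_pos _).le]
    exact hpt z
  refine ⟨hintexp, ?_⟩
  have hI1 : ∫ z : E × E, Real.exp (δ * ‖z.1‖ ^ 2) ∂P
      = ∫ x, Real.exp (δ * ‖x‖ ^ 2) ∂μ := by
    rw [← hPfst, integral_map measurable_fst.aemeasurable hcontf.aestronglyMeasurable]
  have hI2 : ∫ z : E × E, Real.exp (δ * ‖z.2‖ ^ 2) ∂P
      = ∫ y, Real.exp (δ * ‖y‖ ^ 2) ∂ν := by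
    rw [← hPsnd, integral_map measurable_snd.aemeasurable hcontf.aestronglyMeasurable]
  calc ∫ z, Real.exp (r * ‖fderiv ℝ c z‖ ^ 2) ∂P
      ≤ ∫ z, g z ∂P := integral_mono hintexp hintg hpt
    _ = Real.exp (2 * r * A ^ 2) *
        (((∫ x, Real.exp (δ * ‖x‖ ^ 2) ∂μ) + ∫ y, Real.exp (δ * ‖y‖ ^ 2) ∂ν) / 2) := by
        rw [hg, integral_const_mul, integral_div, integral_add hint1 hint2, hI1, hI2]

end
end

section
/- Let ε > 0, let c : ℝ^d × ℝ^d → [0,∞) be twice continuously differentiable with ‖∇²c‖_op ≤ R everywhere for some R > 0, let μ be a probability measure on ℝ^d with finite second moment, and let ν be a probability measure on ℝ^d with ∫ e^{δ|y|²} ν(dy) < ∞ for some δ > 0. Let φ ∈ L¹(μ) with ∫ φ dμ = 0 and define ψ(y) := −ε log ∫ exp((φ(x) − c(x,y))/ε) μ(dx). Then for every bounded set B ⊂ ℝ^d and every p > 0, the integral ∫_{ℝ^d} sup_{x ∈ B} exp( p(ψ(y) − c(x,y))/ε ) ν(dy) is finite. -/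
open MeasureTheory

noncomputable section

variable {d : ℕ}

local notation "E" => EuclideanSpace ℝ (Fin d)

private lemma amgm_aux {q δ s : ℝ} (hδ : 0 < δ) : q * s ≤ q ^ 2 / (4 * δ) + δ * s ^ 2 := by
  rw [div_add' _ _ _ (by positivity), le_div_iff₀ (by positivity)]
  nlinarith [sq_nonneg (q - 2 * δ * s)]

/-- Integrability lemma for the Schrödinger potential `ψ`: for every bounded set `B`
and every `p > 0`, the function `y ↦ sup_{x ∈ B} exp(p (ψ(y) − c(x,y))/ε)` is
`ν`-integrable. -/
theorem integrability_sup_exp_potential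
    (ε : ℝ) (hε : 0 < ε)
    (c : E × E → ℝ) (hc0 : ∀ z, 0 ≤ c z) (hc : ContDiff ℝ 2 c)
    (R : ℝ) (hR : 0 < R) (hHess : ∀ z : E × E, ‖iteratedFDeriv ℝ 2 c z‖ ≤ R)
    (μ : Measure E) [IsProbabilityMeasure μ] (h2μ : Integrable (fun x => ‖x‖ ^ 2) μ)
    (ν : Measure E) [IsProbabilityMeasure ν]
    (δ : ℝ) (hδ : 0 < δ) (hν : Integrable (fun y => Real.exp (δ * ‖y‖ ^ 2)) ν)
    (φ : E → ℝ) (hφ : Integrable φ μ) (hφ0 : ∫ x, φ x ∂μ = 0)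
    (ψ : E → ℝ)
    (hψ : ∀ y, ψ y = -ε * Real.log (∫ x, Real.exp ((φ x - c (x, y)) / ε) ∂μ)) :
    ∀ B : Set E, Bornology.IsBounded B → ∀ p : ℝ, 0 < p →
      Integrable (fun y => ⨆ x ∈ B, Real.exp (p * (ψ y - c (x, y)) / ε)) ν := by
  intro B hB p hp
  have hεne : ε ≠ 0 := ne_of_gt hε
  -- measurable representative of φ
  set φ' : E → ℝ := hφ.1.mk φ with hφ'def
  have hφ'm : StronglyMeasurable φ' := hφ.1.stronglyMeasurable_mk
  have hφ'ae : φ =ᵐ[μ] φ' := hφ.1.ae_eq_mk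
  have hInt_eq : ∀ y : E, (∫ x, Real.exp ((φ x - c (x, y)) / ε) ∂μ)
      = ∫ x, Real.exp ((φ' x - c (x, y)) / ε) ∂μ := by
    intro y
    refine integral_congr_ae ?_
    filter_upwards [hφ'ae] with x hx
    rw [hx]
  set L : ℝ := ‖fderiv ℝ c 0‖ with hLdef
  have hL0 : 0 ≤ L := norm_nonneg _
  have hder : Differentiable ℝ c := hc.differentiable (by norm_num)
  have hc1 : ContDiff ℝ 1 (fderiv ℝ c) := hc.fderiv_right (by norm_num)
  have hder2 : Differentiable ℝ (fderiv ℝ c) := hc1.differentiable (by norm_num)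
  have hfd2 : ∀ z : E × E, ‖fderiv ℝ (fderiv ℝ c) z‖ ≤ R := by
    intro z
    have h1 : iteratedFDeriv ℝ 1 (fderiv ℝ c) z
        = (continuousMultilinearCurryFin1 ℝ (E × E) ((E × E) →L[ℝ] ℝ)).symm
            (fderiv ℝ (fderiv ℝ c) z) := by
      refine ContinuousMultilinearMap.ext fun m => ContinuousLinearMap.ext fun x => ?_
      simp [iteratedFDeriv_one_apply]
    have h2 : ‖fderiv ℝ (fderiv ℝ c) z‖ = ‖iteratedFDeriv ℝ 2 c z‖ := by
      rw [show (2 : ℕ) = 1 + 1 from rfl, ← norm_iteratedFDeriv_fderiv, h1,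
        LinearIsometryEquiv.norm_map]
    rw [h2]; exact hHess z
  have hlip : LipschitzWith R.toNNReal (fderiv ℝ c) := by
    refine lipschitzWith_of_nnnorm_fderiv_le hder2 (fun z => ?_)
    rw [← NNReal.coe_le_coe, coe_nnnorm, Real.coe_toNNReal _ hR.le]
    exact hfd2 z
  have hgrad : ∀ z : E × E, ‖fderiv ℝ c z‖ ≤ L + R * ‖z‖ := by
    intro z
    have h := hlip.dist_le_mul z 0
    rw [dist_eq_norm, dist_eq_norm, sub_zero, Real.coe_toNNReal _ hR.le] at h
    have h2 := norm_sub_norm_le (fderiv ℝ c z) (fderiv ℝ c 0)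
    rw [hLdef]; linarith
  -- the key Lipschitz-type comparison of c at two points with the same y
  have hkey : ∀ (K' : ℝ), 0 ≤ K' → ∀ (y x x' : E), ‖x‖ ≤ K' → ‖x'‖ ≤ K' →
      c (x', y) - c (x, y) ≤ (L + R * (K' + ‖y‖)) * (2 * K') := by
    intro K' hK' y x x' hx hx'
    have hmem : ∀ u : E, ‖u‖ ≤ K' → (u, y) ∈ Metric.closedBall (0 : E × E) (K' + ‖y‖) := by
      intro u hu
      rw [mem_closedBall_zero_iff, Prod.norm_def]
      exact max_le (by simpa using le_trans hu (by linarith [norm_nonneg y]))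
        (by simp; linarith)
    have hbound : ∀ z ∈ Metric.closedBall (0 : E × E) (K' + ‖y‖),
        ‖fderiv ℝ c z‖ ≤ L + R * (K' + ‖y‖) := by
      intro z hz
      rw [mem_closedBall_zero_iff] at hz
      have := hgrad z
      nlinarith [norm_nonneg z]
    have hineq := (convex_closedBall (0 : E × E) (K' + ‖y‖)).norm_image_sub_le_of_norm_fderiv_le
      (fun z _ => hder z) hbound (hmem x hx) (hmem x' hx')
    have hdiff : ‖((x', y) : E × E) - (x, y)‖ ≤ 2 * K' := by
      have he : ((x', y) : E × E) - (x, y) = (x' - x, (0 : E)) := by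
        simp [Prod.ext_iff]
      rw [he, Prod.norm_def]
      simp only [norm_zero]
      rw [max_eq_left (norm_nonneg _)]
      calc ‖x' - x‖ ≤ ‖x'‖ + ‖x‖ := norm_sub_le _ _
        _ ≤ 2 * K' := by linarith
    have hC0 : 0 ≤ L + R * (K' + ‖y‖) := by nlinarith [norm_nonneg y]
    calc c (x', y) - c (x, y) ≤ |c (x', y) - c (x, y)| := le_abs_self _
      _ = ‖c (x', y) - c (x, y)‖ := (Real.norm_eq_abs _).symm
      _ ≤ (L + R * (K' + ‖y‖)) * ‖((x', y) : E × E) - (x, y)‖ := hineq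
      _ ≤ (L + R * (K' + ‖y‖)) * (2 * K') := by nlinarith
  -- choose a set of positive measure on which φ' is bounded below and ‖x‖ bounded
  set Sn : ℕ → Set E := fun n => {x : E | ‖x‖ ≤ (n : ℝ) ∧ -(n : ℝ) ≤ φ' x} with hSndef
  have hSnmeas : ∀ n, MeasurableSet (Sn n) :=
    fun n => (measurableSet_le measurable_norm measurable_const).inter
      (measurableSet_le measurable_const hφ'm.measurable)
  have hSnunion : (⋃ n, Sn n) = Set.univ := by
    ext x
    simp only [Set.mem_iUnion, Set.mem_univ, iff_true]
    obtain ⟨n, hn⟩ := exists_nat_ge (max ‖x‖ |φ' x|)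
    refine ⟨n, le_trans (le_max_left _ _) hn, ?_⟩
    have h1 := le_trans (le_max_right ‖x‖ |φ' x|) hn
    have h2 := neg_abs_le (φ' x)
    linarith
  have hexn : ∃ n, μ (Sn n) ≠ 0 := by
    by_contra h
    push_neg at h
    have h0 : μ (⋃ n, Sn n) = 0 := measure_iUnion_null h
    rw [hSnunion, measure_univ] at h0
    simp at h0
  obtain ⟨n, hn⟩ := hexn
  set m : ℝ := (μ (Sn n)).toReal with hmdef
  have hm0 : 0 < m := ENNReal.toReal_pos hn (measure_ne_top μ _)
  have hm1 : m ≤ 1 := by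
    rw [hmdef]
    have : μ (Sn n) ≤ μ Set.univ := measure_mono (Set.subset_univ (Sn n))
    rw [measure_univ] at this
    simpa using ENNReal.toReal_mono ENNReal.one_ne_top this
  -- a ball containing B and Sn n
  obtain ⟨r, hrB⟩ := hB.subset_closedBall (0 : E)
  set K' : ℝ := max 0 (max r n) with hK'def
  have hK'0 : 0 ≤ K' := le_max_left _ _
  have hBK' : ∀ x ∈ B, ‖x‖ ≤ K' := by
    intro x hx
    have := hrB hx
    rw [mem_closedBall_zero_iff] at this
    exact le_trans this (le_trans (le_max_left _ _) (le_max_right _ _))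
  have hSK' : ∀ x ∈ Sn n, ‖x‖ ≤ K' := by
    intro x hx
    exact le_trans hx.1 (le_trans (le_max_right _ _) (le_max_right _ _))
  set C₀ : ℝ := ε * (-Real.log m) + n + (L + R * K') * (2 * K') with hC₀def
  set C₁ : ℝ := R * (2 * K') with hC₁def
  have hlogm : Real.log m ≤ 0 := Real.log_nonpos hm0.le hm1
  have hC₀0 : 0 ≤ C₀ := by
    have hn0 : (0 : ℝ) ≤ n := Nat.cast_nonneg n
    have e1 : 0 ≤ ε * (-Real.log m) := mul_nonneg hε.le (by linarith)
    have e2 : 0 ≤ (L + R * K') * (2 * K') :=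
      mul_nonneg (by nlinarith) (by linarith)
    rw [hC₀def]; linarith
  have hC₁0 : 0 ≤ C₁ := by
    rw [hC₁def]; exact mul_nonneg hR.le (by linarith)
  -- the main pointwise bound on ψ y - c (x', y) for x' ∈ B
  have hmain : ∀ (y x' : E), x' ∈ B → ψ y - c (x', y) ≤ C₀ + C₁ * ‖y‖ := by
    intro y x' hx'
    have hCy : (L + R * (K' + ‖y‖)) * (2 * K')
        = (L + R * K') * (2 * K') + C₁ * ‖y‖ := by rw [hC₁def]; ring
    by_cases hI : Integrable (fun x => Real.exp ((φ' x - c (x, y)) / ε)) μ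
    · set a : ℝ := Real.exp ((-(n : ℝ) - (c (x', y) + (L + R * (K' + ‖y‖)) * (2 * K'))) / ε)
        with hadef
      have hub : ∀ x : E, (Sn n).indicator (fun _ => a) x ≤ Real.exp ((φ' x - c (x, y)) / ε) := by
        intro x
        by_cases hx : x ∈ Sn n
        · rw [Set.indicator_of_mem hx]
          rw [hadef]
          apply Real.exp_le_exp.mpr
          have hkx := hkey K' hK'0 y x' x (hBK' x' hx') (hSK' x hx)
          have hφx := hx.2
          rw [div_le_div_iff_of_pos_right hε]
          linarith
        · rw [Set.indicator_of_notMem hx]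
          positivity
      have hind : Integrable ((Sn n).indicator (fun _ => a)) μ :=
        (integrable_const a).indicator (hSnmeas n)
      have hle := integral_mono hind hI hub
      rw [integral_indicator_const a (hSnmeas n), smul_eq_mul] at hle
      have hma : 0 < m * a := by positivity
      have hFpos : 0 < ∫ x, Real.exp ((φ' x - c (x, y)) / ε) ∂μ := lt_of_lt_of_le hma hle
      have hlog : Real.log (m * a) ≤ Real.log (∫ x, Real.exp ((φ' x - c (x, y)) / ε) ∂μ) :=
        Real.log_le_log hma hle
      rw [Real.log_mul (ne_of_gt hm0) (by positivity), hadef, Real.log_exp] at hlog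
      have hψy : ψ y ≤ -ε * (Real.log m
          + (-(n : ℝ) - (c (x', y) + (L + R * (K' + ‖y‖)) * (2 * K'))) / ε) := by
        rw [hψ y, hInt_eq y]
        exact mul_le_mul_of_nonpos_left hlog (by linarith)
      have hdivε : -ε * ((-(n : ℝ) - (c (x', y) + (L + R * (K' + ‖y‖)) * (2 * K'))) / ε)
          = (n : ℝ) + c (x', y) + (L + R * (K' + ‖y‖)) * (2 * K') := by
        field_simp
        ring
      have hψy2 : ψ y ≤ ε * (-Real.log m) + n + c (x', y)
          + (L + R * (K' + ‖y‖)) * (2 * K') := by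
        have : -ε * (Real.log m
            + (-(n : ℝ) - (c (x', y) + (L + R * (K' + ‖y‖)) * (2 * K'))) / ε)
            = ε * (-Real.log m)
              + (-ε * ((-(n : ℝ) - (c (x', y) + (L + R * (K' + ‖y‖)) * (2 * K'))) / ε)) := by
          ring
        rw [this, hdivε] at hψy
        linarith
      rw [hC₀def]
      rw [hCy] at hψy2
      linarith
    · have h0 : (∫ x, Real.exp ((φ x - c (x, y)) / ε) ∂μ) = 0 := by
        rw [hInt_eq y]; exact integral_undef hI
      rw [hψ y, h0, Real.log_zero, mul_zero]
      have h1 := hc0 (x', y)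
      have h2 : 0 ≤ C₁ * ‖y‖ := mul_nonneg hC₁0 (norm_nonneg y)
      linarith
  -- the dominating function
  set q : ℝ := p * C₁ / ε with hqdef
  set D0 : ℝ := Real.exp (p * C₀ / ε + q ^ 2 / (4 * δ)) with hD0def
  set G : E → ℝ := fun y => D0 * Real.exp (δ * ‖y‖ ^ 2) with hGdef
  have hD0pos : 0 < D0 := Real.exp_pos _
  have hGpos : ∀ y, 0 < G y := fun y => by
    rw [hGdef]; positivity
  have hdom : ∀ (y x' : E), x' ∈ B → Real.exp (p * (ψ y - c (x', y)) / ε) ≤ G y := by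
    intro y x' hx'
    have h1 := hmain y x' hx'
    have h2 : p * (ψ y - c (x', y)) / ε ≤ p * (C₀ + C₁ * ‖y‖) / ε := by
      rw [div_le_div_iff_of_pos_right hε]
      exact mul_le_mul_of_nonneg_left h1 hp.le
    have h3 : p * (C₀ + C₁ * ‖y‖) / ε = p * C₀ / ε + q * ‖y‖ := by
      rw [hqdef]; field_simp
    have h4 : q * ‖y‖ ≤ q ^ 2 / (4 * δ) + δ * ‖y‖ ^ 2 := amgm_aux hδ
    have h5 : p * (ψ y - c (x', y)) / ε ≤ p * C₀ / ε + q ^ 2 / (4 * δ) + δ * ‖y‖ ^ 2 := by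
      rw [h3] at h2; linarith
    calc Real.exp (p * (ψ y - c (x', y)) / ε)
        ≤ Real.exp (p * C₀ / ε + q ^ 2 / (4 * δ) + δ * ‖y‖ ^ 2) := Real.exp_le_exp.mpr h5
      _ = G y := by simp only [hGdef, hD0def]; rw [← Real.exp_add]
  -- measurability of ψ
  have hFmeas : StronglyMeasurable (fun y : E => ∫ x, Real.exp ((φ' x - c (x, y)) / ε) ∂μ) := by
    have hg : StronglyMeasurable (fun z : E × E => Real.exp ((φ' z.2 - c (z.2, z.1)) / ε)) := by
      apply Measurable.stronglyMeasurable
      exact (((hφ'm.measurable.comp measurable_snd).sub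
        (hc.continuous.measurable.comp (measurable_snd.prodMk measurable_fst))).div_const ε).exp
    exact hg.integral_prod_right'
  have hψmeas : Measurable ψ := by
    have hψe : ψ = fun y => -ε * Real.log (∫ x, Real.exp ((φ' x - c (x, y)) / ε) ∂μ) := by
      funext y; rw [hψ y, hInt_eq y]
    rw [hψe]
    exact measurable_const.mul hFmeas.measurable.log
  -- split on whether B is empty
  rcases B.eq_empty_or_nonempty with hBe | hBne
  · subst hBe
    have h0 : (fun y : E => ⨆ x ∈ (∅ : Set E), Real.exp (p * (ψ y - c (x, y)) / ε))
        = fun _ => (0 : ℝ) := by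
      funext y
      simp [Set.mem_empty_iff_false]
    rw [h0]
    exact integrable_const 0
  · haveI : Nonempty ↥B := hBne.to_subtype
    obtain ⟨D₀, hD₀c, hD₀d⟩ := TopologicalSpace.exists_countable_dense ↥B
    have hD₀ne : D₀.Nonempty := hD₀d.nonempty
    obtain ⟨u, hu⟩ := Set.Countable.exists_eq_range hD₀c hD₀ne
    set v : ℕ → E := fun k => (u k : E) with hvdef
    have hvB : ∀ k, v k ∈ B := fun k => (u k).2
    have hBcl : B ⊆ closure (Set.range v) := by
      intro x hx
      have h1 : (⟨x, hx⟩ : ↥B) ∈ closure D₀ := by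
        rw [hD₀d.closure_eq]; trivial
      have h2 : x ∈ closure (Subtype.val '' D₀) :=
        (image_closure_subset_closure_image continuous_subtype_val)
          (Set.mem_image_of_mem _ h1)
      have h3 : Subtype.val '' D₀ = Set.range v := by
        rw [hu, ← Set.range_comp]; rfl
      rwa [h3] at h2
    set f : E → E → ℝ := fun x y => Real.exp (p * (ψ y - c (x, y)) / ε) with hfdef
    set T : E → ℝ := fun y => ⨆ k : ℕ, f (v k) y with hTdef
    have hTbdd : ∀ y, BddAbove (Set.range fun k => f (v k) y) := fun y =>
      ⟨G y, by rintro _ ⟨k, rfl⟩; exact hdom y (v k) (hvB k)⟩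
    have hTub : ∀ y, T y ≤ G y := fun y =>
      Real.iSup_le (fun k => hdom y (v k) (hvB k)) (hGpos y).le
    have hT0 : ∀ y, 0 ≤ T y := fun y => Real.iSup_nonneg fun k => (Real.exp_pos _).le
    have hsup_eq : ∀ y, (⨆ x ∈ B, f x y) = T y := by
      intro y
      apply le_antisymm
      · refine Real.iSup_le (fun x => Real.iSup_le (fun hx => ?_) (hT0 y)) (hT0 y)
        have hcy : Continuous fun x : E => c (x, y) :=
          hc.continuous.comp (continuous_id.prodMk continuous_const)
        have hcont : Continuous fun x : E => f x y :=
          Real.continuous_exp.comp ((continuous_const.mul (continuous_const.sub hcy)).div_const ε)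
        have hclosed : IsClosed {x : E | f x y ≤ T y} := isClosed_le hcont continuous_const
        have hsubset : Set.range v ⊆ {x : E | f x y ≤ T y} := by
          rintro _ ⟨k, rfl⟩
          exact le_ciSup (hTbdd y) k
        exact closure_minimal hsubset hclosed (hBcl hx)
      · refine Real.iSup_le (fun k => ?_)
          (Real.iSup_nonneg fun x => Real.iSup_nonneg fun _ => (Real.exp_pos _).le)
        set g : E → ℝ := fun x => ⨆ _ : x ∈ B, f x y with hgdef
        have hgb : BddAbove (Set.range g) := by
          refine ⟨G y, ?_⟩
          rintro _ ⟨x, rfl⟩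
          exact Real.iSup_le (fun hx => hdom y x hx) (hGpos y).le
        have he : (⨆ _ : v k ∈ B, f (v k) y) = f (v k) y := ciSup_pos (hvB k)
        exact (le_of_eq he.symm).trans (le_ciSup hgb (v k))
    have hTmeas : Measurable T := by
      apply Measurable.iSup
      intro k
      have hcy : Measurable fun y : E => c (v k, y) :=
        (hc.continuous.comp (continuous_const.prodMk continuous_id)).measurable
      exact (((hψmeas.sub hcy).const_mul p).div_const ε).exp
    have hGint : Integrable G ν := hν.const_mul D0
    have hTint : Integrable T ν := by
      refine hGint.mono hTmeas.aestronglyMeasurable (ae_of_all _ fun y => ?_)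
      rw [Real.norm_eq_abs, Real.norm_eq_abs, abs_of_nonneg (hT0 y),
        abs_of_nonneg (hGpos y).le]
      exact hTub y
    have hfun : (fun y => ⨆ x ∈ B, Real.exp (p * (ψ y - c (x, y)) / ε)) = T :=
      funext hsup_eq
    rw [hfun]
    exact hTint

end
end

section
/- Let μ and ν be probability measures on ℝ^d, let c : ℝ^d × ℝ^d → [0,∞) be measurable, and let ε > 0. Suppose φ ∈ L¹(μ) and ψ ∈ L¹(ν) are such that π(dx,dy) := exp((φ(x)+ψ(y)−c(x,y))/ε) μ(dx)ν(dy) is a probability measure belonging to Π(μ,ν) with ∫ c dπ < ∞. Then for every P ∈ Π(μ,ν) with ∫ c dP < ∞, the Pythagorean identity holds in [0,∞]: ∫ c dP + ε H(P | μ⊗ν) = ∫ c dπ + ε H(π | μ⊗ν) + ε H(P | π). In particular, π is the unique minimizer over Π(μ,ν) of the functional P ↦ ∫ c dP + ε H(P | μ⊗ν). -/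
open MeasureTheory
open scoped ENNReal

noncomputable section

variable {d : ℕ}

local notation "E" => EuclideanSpace ℝ (Fin d)

open Classical in
/-- Relative entropy `H(P|Q)`, valued in `(-∞, ∞]`. -/
def relEntropy {α : Type*} [MeasurableSpace α] (P Q : Measure α) : EReal :=
  if P ≪ Q ∧ Integrable (fun x => Real.log ((P.rnDeriv Q x).toReal)) P
  then ((∫ x, Real.log ((P.rnDeriv Q x).toReal) ∂P : ℝ) : EReal) else ⊤

/-- The entropic transport cost functional
`J(P) = ∫ c dP + ε H(P | μ⊗ν)`, with the cost integral taken in `[0,∞]`. -/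
def entCost (ε : ℝ) (c : E × E → ℝ) (μ ν : Measure E) (P : Measure (E × E)) : EReal :=
  ((∫⁻ z, ENNReal.ofReal (c z) ∂P : ℝ≥0∞) : EReal)
    + (ε : EReal) * relEntropy P (μ.prod ν)

section Aux

lemma mylog_aux {t : ℝ} (ht : 0 ≤ t) : t - 1 ≤ t * Real.log t := by
  rcases ht.eq_or_lt with h | h
  · simp [← h]
  · have h1 : Real.log t⁻¹ ≤ t⁻¹ - 1 := Real.log_le_sub_one_of_pos (by positivity)
    rw [Real.log_inv] at h1
    have h2 := mul_le_mul_of_nonneg_left h1 h.le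
    rw [mul_sub, mul_inv_cancel₀ h.ne'] at h2
    nlinarith

lemma mylog_aux_eq {t : ℝ} (ht : 0 ≤ t) (h : t * Real.log t = t - 1) : t = 1 := by
  by_contra hne
  rcases ht.eq_or_lt with h0 | h0
  · rw [← h0] at h; norm_num at h
  · have h1 : Real.log t⁻¹ < t⁻¹ - 1 :=
      Real.log_lt_sub_one_of_pos (by positivity) (fun hc => hne (by rwa [inv_eq_one] at hc))
    rw [Real.log_inv] at h1
    have h2 := mul_lt_mul_of_pos_left h1 h0
    rw [mul_sub, mul_inv_cancel₀ h0.ne'] at h2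
    nlinarith

variable {α : Type*} [MeasurableSpace α]

/-- Gibbs inequality. -/
lemma gibbs_nonneg (P Q : Measure α) [IsProbabilityMeasure P] [IsProbabilityMeasure Q]
    (hPQ : P ≪ Q) (hint : Integrable (fun x => Real.log ((P.rnDeriv Q x).toReal)) P) :
    0 ≤ ∫ x, Real.log ((P.rnDeriv Q x).toReal) ∂P := by
  set g : α → ℝ := fun x => (P.rnDeriv Q x).toReal with hg
  have hchange : ∫ x, g x • Real.log (g x) ∂Q = ∫ x, Real.log (g x) ∂P :=
    integral_rnDeriv_smul hPQ
  have hint' : Integrable (fun x => g x • Real.log (g x)) Q :=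
    (integrable_rnDeriv_smul_iff hPQ).2 hint
  have hgint : Integrable g Q := Measure.integrable_toReal_rnDeriv
  have hgone : ∫ x, g x ∂Q = 1 := by
    rw [hg, Measure.integral_toReal_rnDeriv hPQ]; simp
  simp only [smul_eq_mul] at hchange hint'
  have hpos : ∀ x, 0 ≤ g x * Real.log (g x) - g x + 1 := fun x => by
    have := mylog_aux (t := g x) ENNReal.toReal_nonneg; linarith
  have h0 : 0 ≤ ∫ x, (g x * Real.log (g x) - g x + 1) ∂Q := integral_nonneg hpos
  have h3 : ∫ x, (g x * Real.log (g x) - g x + 1) ∂Q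
      = ∫ x, g x * Real.log (g x) ∂Q - ∫ x, g x ∂Q + 1 := by
    have h4 := integral_add (hint'.sub hgint) (integrable_const (1:ℝ)) (μ := Q)
    have h5 := integral_sub hint' hgint (μ := Q)
    simp only [Pi.sub_apply] at h4
    rw [h4, h5, integral_const]
    simp
  rw [h3, hgone] at h0
  linarith [hchange]

/-- Equality case of the Gibbs inequality. -/
lemma gibbs_eq (P Q : Measure α) [IsProbabilityMeasure P] [IsProbabilityMeasure Q]
    (hPQ : P ≪ Q) (hint : Integrable (fun x => Real.log ((P.rnDeriv Q x).toReal)) P)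
    (hzero : ∫ x, Real.log ((P.rnDeriv Q x).toReal) ∂P = 0) : P = Q := by
  set g : α → ℝ := fun x => (P.rnDeriv Q x).toReal with hg
  have hchange : ∫ x, g x • Real.log (g x) ∂Q = ∫ x, Real.log (g x) ∂P :=
    integral_rnDeriv_smul hPQ
  have hint' : Integrable (fun x => g x • Real.log (g x)) Q :=
    (integrable_rnDeriv_smul_iff hPQ).2 hint
  have hgint : Integrable g Q := Measure.integrable_toReal_rnDeriv
  have hgone : ∫ x, g x ∂Q = 1 := by
    rw [hg, Measure.integral_toReal_rnDeriv hPQ]; simp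
  simp only [smul_eq_mul] at hchange hint'
  have hpos : ∀ x, 0 ≤ g x * Real.log (g x) - g x + 1 := fun x => by
    have := mylog_aux (t := g x) ENNReal.toReal_nonneg; linarith
  have hInt : Integrable (fun x => g x * Real.log (g x) - g x + 1) Q :=
    (hint'.sub hgint).add (integrable_const 1)
  have h3 : ∫ x, (g x * Real.log (g x) - g x + 1) ∂Q
      = ∫ x, g x * Real.log (g x) ∂Q - ∫ x, g x ∂Q + 1 := by
    have h4 := integral_add (hint'.sub hgint) (integrable_const (1:ℝ)) (μ := Q)
    have h5 := integral_sub hint' hgint (μ := Q)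
    simp only [Pi.sub_apply] at h4
    rw [h4, h5, integral_const]
    simp
  have hz2 : ∫ x, (g x * Real.log (g x) - g x + 1) ∂Q = 0 := by
    rw [h3, hgone, hchange, hzero]; ring
  have hae : (fun x => g x * Real.log (g x) - g x + 1) =ᵐ[Q] 0 := by
    rw [← integral_eq_zero_iff_of_nonneg hpos hInt]
    exact hz2
  have hone : (fun x => P.rnDeriv Q x) =ᵐ[Q] (fun _ => 1) := by
    filter_upwards [hae, Measure.rnDeriv_lt_top P Q] with x hx hlt
    simp only [Pi.zero_apply] at hx
    have hgx : g x = 1 := mylog_aux_eq ENNReal.toReal_nonneg (by linarith)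
    have hne : P.rnDeriv Q x ≠ ⊤ := hlt.ne
    rw [hg] at hgx
    simpa [hne] using (ENNReal.toReal_eq_one_iff _).1 hgx
  calc P = Q.withDensity (P.rnDeriv Q) := (Measure.withDensity_rnDeriv_eq P Q hPQ).symm
    _ = Q.withDensity (fun _ => 1) := withDensity_congr_ae hone
    _ = Q := by simp

end Aux

/-- Pythagorean identity for entropic optimal transport: if
`π = exp((φ⊕ψ−c)/ε) μ⊗ν ∈ Π(μ,ν)` with `φ ∈ L¹(μ)`, `ψ ∈ L¹(ν)`, `∫ c dπ < ∞`,
then for every `P ∈ Π(μ,ν)` with `∫ c dP < ∞`,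
`∫ c dP + ε H(P|μ⊗ν) = ∫ c dπ + ε H(π|μ⊗ν) + ε H(P|π)`;
in particular `π` uniquely minimizes `P ↦ ∫ c dP + ε H(P|μ⊗ν)` over `Π(μ,ν)`. -/
theorem entropic_pythagorean_identity
    (μ ν : Measure E) [IsProbabilityMeasure μ] [IsProbabilityMeasure ν]
    (c : E × E → ℝ) (hcm : Measurable c) (hc0 : ∀ z, 0 ≤ c z)
    (ε : ℝ) (hε : 0 < ε)
    (φ ψ : E → ℝ) (hφ : Integrable φ μ) (hψ : Integrable ψ ν)
    (π : Measure (E × E))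
    (hπdef : π = (μ.prod ν).withDensity fun z =>
      ENNReal.ofReal (Real.exp ((φ z.1 + ψ z.2 - c z) / ε)))
    (hπc : IsCoupling π μ ν) (hcπ : Integrable c π) :
    (∀ P : Measure (E × E), IsCoupling P μ ν → Integrable c P →
      ((∫ z, c z ∂P : ℝ) : EReal) + (ε : EReal) * relEntropy P (μ.prod ν)
        = ((∫ z, c z ∂π : ℝ) : EReal) + (ε : EReal) * relEntropy π (μ.prod ν)
            + (ε : EReal) * relEntropy P π) ∧
    (∀ P : Measure (E × E), IsCoupling P μ ν →
      entCost ε c μ ν π ≤ entCost ε c μ ν P) ∧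
    (∀ P : Measure (E × E), IsCoupling P μ ν →
      entCost ε c μ ν P = entCost ε c μ ν π → P = π) := by
  classical
  haveI hπprob : IsProbabilityMeasure π := hπc.1
  set Q : Measure (E × E) := μ.prod ν with hQdef
  -- measurable versions of φ, ψ
  obtain ⟨φ', hφ'm, hφ'ae⟩ : ∃ φ', Measurable φ' ∧ φ =ᵐ[μ] φ' :=
    ⟨hφ.1.aemeasurable.mk φ, hφ.1.aemeasurable.measurable_mk, hφ.1.aemeasurable.ae_eq_mk⟩
  obtain ⟨ψ', hψ'm, hψ'ae⟩ : ∃ ψ', Measurable ψ' ∧ ψ =ᵐ[ν] ψ' :=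
    ⟨hψ.1.aemeasurable.mk ψ, hψ.1.aemeasurable.measurable_mk, hψ.1.aemeasurable.ae_eq_mk⟩
  set ρ : E × E → ℝ := fun z => (φ' z.1 + ψ' z.2 - c z) / ε with hρdef
  have hρmeas : Measurable ρ :=
    (((hφ'm.comp measurable_fst).add (hψ'm.comp measurable_snd)).sub hcm).div_const ε
  have qmp_fst : Measure.QuasiMeasurePreserving Prod.fst Q μ :=
    ⟨measurable_fst, by rw [hQdef, Measure.map_fst_prod]; simp; exact Measure.AbsolutelyContinuous.rfl⟩
  have qmp_snd : Measure.QuasiMeasurePreserving Prod.snd Q ν :=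
    ⟨measurable_snd, by rw [hQdef, Measure.map_snd_prod]; simp; exact Measure.AbsolutelyContinuous.rfl⟩
  have hfst_ae : (fun z : E × E => φ z.1) =ᵐ[Q] fun z => φ' z.1 := qmp_fst.ae_eq_comp hφ'ae
  have hsnd_ae : (fun z : E × E => ψ z.2) =ᵐ[Q] fun z => ψ' z.2 := qmp_snd.ae_eq_comp hψ'ae
  have hae0 : (fun z : E × E => ENNReal.ofReal (Real.exp ((φ z.1 + ψ z.2 - c z) / ε)))
      =ᵐ[Q] fun z => ENNReal.ofReal (Real.exp (ρ z)) := by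
    filter_upwards [hfst_ae, hsnd_ae] with z h1 h2
    simp only [hρdef, h1, h2]
  have hπQ : π = Q.withDensity (fun z => ENNReal.ofReal (Real.exp (ρ z))) :=
    hπdef.trans (withDensity_congr_ae hae0)
  have hπac : π ≪ Q := hπQ ▸ withDensity_absolutelyContinuous _ _
  have hQπ : Q ≪ π := by
    rw [hπQ]
    exact withDensity_absolutelyContinuous'
      (ENNReal.measurable_ofReal.comp (Real.measurable_exp.comp hρmeas)).aemeasurable
      (Filter.Eventually.of_forall fun z =>
        (ENNReal.ofReal_pos.2 (Real.exp_pos _)).ne')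
  have hrnπ : π.rnDeriv Q =ᵐ[Q] fun z => ENNReal.ofReal (Real.exp (ρ z)) := by
    rw [hπQ]
    exact Measure.rnDeriv_withDensity Q
      (ENNReal.measurable_ofReal.comp (Real.measurable_exp.comp hρmeas))
  have hlogπ : (fun z => Real.log ((π.rnDeriv Q z).toReal)) =ᵐ[Q] ρ := by
    filter_upwards [hrnπ] with z hz
    rw [hz, ENNReal.toReal_ofReal (Real.exp_nonneg _), Real.log_exp]
  -- marginal integration
  have hφ'int : Integrable φ' μ := hφ.congr hφ'ae
  have hψ'int : Integrable ψ' ν := hψ.congr hψ'ae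
  have marg : ∀ P : Measure (E × E), P.map Prod.fst = μ → P.map Prod.snd = ν →
      Integrable c P →
      Integrable ρ P ∧
      ∫ z, ρ z ∂P = (∫ x, φ x ∂μ + ∫ y, ψ y ∂ν - ∫ z, c z ∂P) / ε := by
    intro P hPf hPs hcP
    have hφP : Integrable φ' (P.map Prod.fst) := hPf ▸ hφ'int
    have hψP : Integrable ψ' (P.map Prod.snd) := hPs ▸ hψ'int
    have h1 : Integrable (fun z : E × E => φ' z.1) P :=
      (integrable_map_measure hφP.1 measurable_fst.aemeasurable).1 hφP
    have h2 : Integrable (fun z : E × E => ψ' z.2) P :=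
      (integrable_map_measure hψP.1 measurable_snd.aemeasurable).1 hψP
    have hi1 : ∫ z, φ' z.1 ∂P = ∫ x, φ x ∂μ := by
      calc ∫ z, φ' z.1 ∂P = ∫ x, φ' x ∂(P.map Prod.fst) :=
            (integral_map measurable_fst.aemeasurable hφP.1).symm
        _ = ∫ x, φ x ∂μ := by rw [hPf]; exact (integral_congr_ae hφ'ae).symm
    have hi2 : ∫ z, ψ' z.2 ∂P = ∫ y, ψ y ∂ν := by
      calc ∫ z, ψ' z.2 ∂P = ∫ y, ψ' y ∂(P.map Prod.snd) :=
            (integral_map measurable_snd.aemeasurable hψP.1).symm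
        _ = ∫ y, ψ y ∂ν := by rw [hPs]; exact (integral_congr_ae hψ'ae).symm
    constructor
    · exact ((h1.add h2).sub hcP).div_const ε
    · rw [hρdef]
      simp only [div_eq_mul_inv]
      rw [integral_mul_const]
      have hs1 := integral_sub (h1.add h2) hcP
      have hs2 := integral_add h1 h2
      simp only [Pi.add_apply, Pi.sub_apply] at hs1 hs2
      rw [hs1, hs2, hi1, hi2]
  have hρπint := (marg π hπc.2.1 hπc.2.2 hcπ).1
  have hρπval := (marg π hπc.2.1 hπc.2.2 hcπ).2
  have hlogπ_π : (fun z => Real.log ((π.rnDeriv Q z).toReal)) =ᵐ[π] ρ := hπac.ae_eq hlogπ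
  have hIπ : Integrable (fun z => Real.log ((π.rnDeriv Q z).toReal)) π :=
    hρπint.congr hlogπ_π.symm
  have hHπ : relEntropy π Q
      = (((∫ x, φ x ∂μ + ∫ y, ψ y ∂ν - ∫ z, c z ∂π) / ε : ℝ) : EReal) := by
    rw [relEntropy, if_pos ⟨hπac, hIπ⟩, integral_congr_ae hlogπ_π, hρπval]
  -- the key Pythagorean identity
  have key : ∀ P : Measure (E × E), IsCoupling P μ ν → Integrable c P →
      ((∫ z, c z ∂P : ℝ) : EReal) + (ε : EReal) * relEntropy P Q
        = ((∫ z, c z ∂π : ℝ) : EReal) + (ε : EReal) * relEntropy π Q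
            + (ε : EReal) * relEntropy P π := by
    intro P hP hcP
    haveI : IsProbabilityMeasure P := hP.1
    haveI : SigmaFinite P := inferInstance
    rw [hHπ]
    by_cases hPac : P ≪ Q
    · have hPπ : P ≪ π := hPac.trans hQπ
      have hchain : (fun z => Real.log ((P.rnDeriv Q z).toReal))
          =ᵐ[P] fun z => Real.log ((P.rnDeriv π z).toReal) + ρ z := by
        filter_upwards [hPac.ae_eq (Measure.rnDeriv_mul_rnDeriv hPπ), Measure.rnDeriv_pos hPπ,
          hPπ.ae_le (Measure.rnDeriv_lt_top P π), hPac.ae_eq hrnπ] with z hz hpos hlt heq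
        have hne : ((P.rnDeriv π z).toReal) ≠ 0 :=
          (ENNReal.toReal_pos hpos.ne' hlt.ne).ne'
        rw [← hz, Pi.mul_apply, heq, ENNReal.toReal_mul,
          ENNReal.toReal_ofReal (Real.exp_nonneg _),
          Real.log_mul hne (Real.exp_pos _).ne', Real.log_exp]
      have hρint := (marg P hP.2.1 hP.2.2 hcP).1
      have hρval := (marg P hP.2.1 hP.2.2 hcP).2
      by_cases hI : Integrable (fun z => Real.log ((P.rnDeriv π z).toReal)) P
      · have hIQ : Integrable (fun z => Real.log ((P.rnDeriv Q z).toReal)) P :=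
          (hI.add hρint).congr hchain.symm
        have hQval : ∫ z, Real.log ((P.rnDeriv Q z).toReal) ∂P
            = ∫ z, Real.log ((P.rnDeriv π z).toReal) ∂P
              + (∫ x, φ x ∂μ + ∫ y, ψ y ∂ν - ∫ z, c z ∂P) / ε := by
          rw [integral_congr_ae hchain, integral_add hI hρint, hρval]
        rw [relEntropy, if_pos ⟨hPac, hIQ⟩, relEntropy, if_pos ⟨hPπ, hI⟩, hQval]
        rw [← EReal.coe_mul, ← EReal.coe_mul, ← EReal.coe_mul, ← EReal.coe_add,
          ← EReal.coe_add, ← EReal.coe_add, EReal.coe_eq_coe_iff]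
        field_simp
        ring
      · have hIQ' : ¬ Integrable (fun z => Real.log ((P.rnDeriv Q z).toReal)) P := by
          intro h
          refine hI ((h.sub hρint).congr ?_)
          filter_upwards [hchain] with z hz
          simp [hz]
        rw [relEntropy, if_neg (fun h => hIQ' h.2), relEntropy, if_neg (fun h => hI h.2),
          EReal.coe_mul_top_of_pos hε, EReal.coe_add_top, ← EReal.coe_mul, ← EReal.coe_add,
          EReal.add_top_of_ne_bot (EReal.coe_ne_bot _)]
    · have hPπ' : ¬ P ≪ π := fun h => hPac (h.trans hπac)
      rw [relEntropy, if_neg (fun h => hPac h.1), relEntropy, if_neg (fun h => hPπ' h.1),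
        EReal.coe_mul_top_of_pos hε, EReal.coe_add_top, ← EReal.coe_mul, ← EReal.coe_add,
        EReal.add_top_of_ne_bot (EReal.coe_ne_bot _)]
  -- converting lintegrals to integrals
  have hlint : ∀ P : Measure (E × E), Integrable c P →
      ((∫⁻ z, ENNReal.ofReal (c z) ∂P : ℝ≥0∞) : EReal) = ((∫ z, c z ∂P : ℝ) : EReal) := by
    intro P hcP
    rw [← ofReal_integral_eq_lintegral_ofReal hcP (Filter.Eventually.of_forall hc0),
      EReal.coe_ennreal_ofReal, max_eq_left (integral_nonneg hc0)]
  have hlint_top : ∀ P : Measure (E × E), ¬ Integrable c P →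
      (∫⁻ z, ENNReal.ofReal (c z) ∂P : ℝ≥0∞) = ⊤ := by
    intro P hcP
    by_contra h
    refine hcP ⟨hcm.aestronglyMeasurable, ?_⟩
    rw [hasFiniteIntegral_iff_ofReal (Filter.Eventually.of_forall hc0)]
    exact lt_top_iff_ne_top.2 h
  refine ⟨key, ?_, ?_⟩
  · -- minimality
    intro P hP
    haveI := hP.1
    by_cases hcP : Integrable c P
    · have hid := key P hP hcP
      have hnn : (0 : EReal) ≤ (ε : EReal) * relEntropy P π := by
        rw [relEntropy]
        split_ifs with h
        · rw [← EReal.coe_mul]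
          exact_mod_cast mul_nonneg hε.le (gibbs_nonneg P π h.1 h.2)
        · rw [EReal.coe_mul_top_of_pos hε]; exact le_top
      rw [entCost, entCost, hlint P hcP, hlint π hcπ, hid]
      exact le_add_of_nonneg_right hnn
    · have htop : entCost ε c μ ν P = ⊤ := by
        have hne : (ε : EReal) * relEntropy P Q ≠ ⊥ := by
          rw [relEntropy]
          split_ifs
          · rw [← EReal.coe_mul]; exact EReal.coe_ne_bot _
          · rw [EReal.coe_mul_top_of_pos hε]; simp
        rw [entCost, hlint_top P hcP, EReal.coe_ennreal_top, EReal.top_add_of_ne_bot hne]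
      rw [htop]
      exact le_top
  · -- uniqueness
    intro P hP heq
    haveI := hP.1
    have hentπ : entCost ε c μ ν π
        = ((∫ z, c z ∂π + ε * ((∫ x, φ x ∂μ + ∫ y, ψ y ∂ν - ∫ z, c z ∂π) / ε) : ℝ) : EReal) := by
      rw [entCost, hlint π hcπ, hHπ, ← EReal.coe_mul, ← EReal.coe_add]
    have hcP : Integrable c P := by
      by_contra hcP
      have htop : entCost ε c μ ν P = ⊤ := by
        have hne : (ε : EReal) * relEntropy P Q ≠ ⊥ := by
          rw [relEntropy]
          split_ifs
          · rw [← EReal.coe_mul]; exact EReal.coe_ne_bot _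
          · rw [EReal.coe_mul_top_of_pos hε]; simp
        rw [entCost, hlint_top P hcP, EReal.coe_ennreal_top, EReal.top_add_of_ne_bot hne]
      rw [htop, hentπ] at heq
      exact EReal.coe_ne_top _ heq.symm
    have hid := key P hP hcP
    rw [entCost, entCost, hlint P hcP, hlint π hcπ] at heq
    have heq2 : ((∫ z, c z ∂π : ℝ) : EReal) + (ε : EReal) * relEntropy π Q
        + (ε : EReal) * relEntropy P π
        = ((∫ z, c z ∂π : ℝ) : EReal) + (ε : EReal) * relEntropy π Q :=
      hid.symm.trans heq
    by_cases hcond : P ≪ π ∧ Integrable (fun z => Real.log ((P.rnDeriv π z).toReal)) P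
    · rw [hHπ, relEntropy, if_pos hcond, ← EReal.coe_mul, ← EReal.coe_mul, ← EReal.coe_add,
        ← EReal.coe_add, EReal.coe_eq_coe_iff] at heq2
      have hr0 : ∫ z, Real.log ((P.rnDeriv π z).toReal) ∂P = 0 := by
        have hεne : ε ≠ 0 := hε.ne'
        nlinarith [heq2]
      exact gibbs_eq P π hcond.1 hcond.2 hr0
    · rw [hHπ, relEntropy, if_neg hcond, EReal.coe_mul_top_of_pos hε, ← EReal.coe_mul,
        ← EReal.coe_add, EReal.add_top_of_ne_bot (EReal.coe_ne_bot _)] at heq2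
      exact absurd heq2.symm (EReal.coe_ne_top _)

end
end
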